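/- Assume (n+m)/(4(n+m−1)) ≤ d ≤ (3n+m−2)/(4(n+m−1)). Then the quadruple y_n = (m−3)/4 + ā_n − b_m, y_{n+m} = b_m + a_{n+m} − a_n − (m−1)/4, y_1 = 0, y_{n+1} = a_{n+m} − a_n is such that (1/4, y) is a solution of the four-variable system (S); in particular λ = 1/4 is an eigenvalue of (S). -/

import Mathlib

open Finset

/-- The four-variable system (S), with variables `y1 = y_1`, `yn = y_n`,
`yn1 = y_{n+1}`, `ynm = y_{n+m}`. -/
def Ssol (n m : ℕ) (a : ℕ → ℝ) (lam y1 yn yn1 ynm : ℝ) : Prop :=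
  yn = min ((1 - (a n + a (n + m))) - 2 * lam + y1 + yn1 - ynm)
      ((∑ i ∈ Finset.Icc 1 (n - 1), a i) - ((n : ℝ) - 1) * lam + y1) ∧
  ynm = min ((1 - (a n + a (n + m))) - lam + y1 + yn1 - yn)
      ((∑ i ∈ Finset.Icc (n + 1) (n + m - 1), a i) - ((m : ℝ) - 1) * lam + yn1) ∧
  y1 = min (a n - lam + (yn + ynm) / 2)
      ((∑ i ∈ Finset.Icc 1 (n - 1), (1 - a i)) - ((n : ℝ) - 1) * lam + yn) ∧
  yn1 = min (a (n + m) - lam + (yn + ynm) / 2)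
      ((∑ i ∈ Finset.Icc (n + 1) (n + m - 1), (1 - a i)) - ((m : ℝ) - 1) * lam + ynm)

theorem stmt7 (n m : ℕ) (hn : 2 ≤ n) (hm : 2 ≤ m) (a : ℕ → ℝ)
    (ha : ∀ i : ℕ, 1 ≤ i → i ≤ n + m → 0 ≤ a i ∧ a i ≤ 1)
    (hprio : a n + a (n + m) ≤ 1)
    (d : ℝ) (hd : d = (∑ i ∈ Finset.Icc 1 (n + m), a i) / ((n : ℝ) + (m : ℝ) - 1))
    (hd1 : ((n : ℝ) + (m : ℝ)) / (4 * ((n : ℝ) + (m : ℝ) - 1)) ≤ d)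
    (hd2 : d ≤ (3 * (n : ℝ) + (m : ℝ) - 2) / (4 * ((n : ℝ) + (m : ℝ) - 1))) :
    Ssol n m a (1 / 4) 0
      (((m : ℝ) - 3) / 4 + (1 - (a n + a (n + m)))
        - (∑ i ∈ Finset.Icc (n + 1) (n + m - 1), a i))
      (a (n + m) - a n)
      ((∑ i ∈ Finset.Icc (n + 1) (n + m - 1), a i) + a (n + m) - a n - ((m : ℝ) - 1) / 4) := by
  have hn' : (2:ℝ) ≤ (n:ℝ) := by exact_mod_cast hn
  have hm' : (2:ℝ) ≤ (m:ℝ) := by exact_mod_cast hm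
  have hN : (0:ℝ) < (n:ℝ) + (m:ℝ) - 1 := by linarith
  set S := ∑ i ∈ Finset.Icc 1 (n + m), a i with hS
  set bn := ∑ i ∈ Finset.Icc 1 (n - 1), a i with hbn
  set bm := ∑ i ∈ Finset.Icc (n + 1) (n + m - 1), a i with hbm
  -- split the big sum
  have hsplit : S = bn + a n + bm + a (n + m) := by
    have h1 : Finset.Icc 1 (n + m) = Finset.Ioc 0 (n + m) := by
      rw [← Finset.Icc_add_one_left_eq_Ioc]; rfl
    have e1 : (∑ i ∈ Finset.Ioc 0 (n-1), a i) + ∑ i ∈ Finset.Ioc (n-1) (n+m), a i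
        = ∑ i ∈ Finset.Ioc 0 (n+m), a i := Finset.sum_Ioc_consecutive _ (by omega) (by omega)
    have e2 : (∑ i ∈ Finset.Ioc (n-1) n, a i) + ∑ i ∈ Finset.Ioc n (n+m), a i
        = ∑ i ∈ Finset.Ioc (n-1) (n+m), a i := Finset.sum_Ioc_consecutive _ (by omega) (by omega)
    have e3 : (∑ i ∈ Finset.Ioc n (n+m-1), a i) + ∑ i ∈ Finset.Ioc (n+m-1) (n+m), a i
        = ∑ i ∈ Finset.Ioc n (n+m), a i := Finset.sum_Ioc_consecutive _ (by omega) (by omega)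
    have s1 : Finset.Ioc (n-1) n = {n} := by
      ext x; simp [Finset.mem_Ioc]; omega
    have s2 : Finset.Ioc (n+m-1) (n+m) = {n+m} := by
      ext x; simp [Finset.mem_Ioc]; omega
    have s3 : Finset.Ioc 0 (n-1) = Finset.Icc 1 (n-1) := by
      rw [← Finset.Icc_add_one_left_eq_Ioc]; rfl
    have s4 : Finset.Ioc n (n+m-1) = Finset.Icc (n+1) (n+m-1) := by
      rw [← Finset.Icc_add_one_left_eq_Ioc]
    rw [s1, Finset.sum_singleton] at e2
    rw [s2, Finset.sum_singleton] at e3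
    rw [hS, h1, ← e1, ← e2, ← e3, s3, s4, ← hbn, ← hbm]
    ring
  -- complements
  have hcn : ∑ i ∈ Finset.Icc 1 (n - 1), (1 - a i) = ((n:ℝ) - 1) - bn := by
    rw [Finset.sum_sub_distrib, Finset.sum_const, Nat.card_Icc]
    have : (n - 1 + 1 - 1 : ℕ) = n - 1 := by omega
    rw [this, hbn, nsmul_eq_mul, mul_one, Nat.cast_sub (by omega), Nat.cast_one]
  have hcm : ∑ i ∈ Finset.Icc (n + 1) (n + m - 1), (1 - a i) = ((m:ℝ) - 1) - bm := by
    rw [Finset.sum_sub_distrib, Finset.sum_const, Nat.card_Icc]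
    have : (n + m - 1 + 1 - (n + 1) : ℕ) = m - 1 := by omega
    rw [this, hbm, nsmul_eq_mul, mul_one, Nat.cast_sub (by omega), Nat.cast_one]
  -- bounds on S
  have hS1 : ((n:ℝ) + (m:ℝ)) / 4 ≤ S := by
    rw [hd] at hd1
    rw [div_le_div_iff₀ (by positivity) hN] at hd1
    nlinarith
  have hS2 : S ≤ (3 * (n:ℝ) + (m:ℝ) - 2) / 4 := by
    rw [hd] at hd2
    rw [div_le_div_iff₀ hN (by positivity)] at hd2
    nlinarith
  refine ⟨?_, ?_, ?_, ?_⟩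
  · rw [min_eq_left (by linarith)]; ring
  · rw [min_eq_right (by linarith)]; ring
  · rw [hcn, min_eq_left (by linarith)]; ring
  · rw [hcm, min_eq_left (by linarith)]; ring
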